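/- For every integer n ≥ 4, every field F of characteristic zero, and any three derivations D_1, D_2, D_3 of the Lie algebra n_{n,1}, there exist scalars (c_1, c_2, c_3) ∈ F³, not all zero, such that the linear map c_1 D_1 + c_2 D_2 + c_3 D_3 is a nilpotent endomorphism of n_{n,1}. (Consequently, at most two linearly nil-independent derivations can be added to n_{n,1} when extending it to a solvable Lie algebra.) -/

import Mathlib

/-- The family `e 1, …, e n` is a basis of `L` realizing the Lie brackets of the
nilpotent Lie algebra `n_{n,1}`. -/
def IsNn1Basis (F : Type*) [Field F] (n : ℕ) {L : Type*} [LieRing L] [LieAlgebra F L]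
    (e : ℕ → L) : Prop :=
  LinearIndependent F (fun i : Fin n => e (i.val + 1)) ∧
  Submodule.span F (Set.range (fun i : Fin n => e (i.val + 1))) = ⊤ ∧
  (∀ j k : ℕ, 1 ≤ j → j ≤ n - 1 → 1 ≤ k → k ≤ n - 1 → ⁅e j, e k⁆ = 0) ∧
  ⁅e 1, e n⁆ = 0 ∧
  (∀ k : ℕ, 2 ≤ k → k ≤ n - 1 → ⁅e k, e n⁆ = e (k - 1))

private lemma nn1_key
    {F : Type*} [Field F] {n : ℕ} (hn : 4 ≤ n)
    {L : Type*} [LieRing L] [LieAlgebra F L]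
    (b : Module.Basis (Fin n) F L)
    (hbrA : ∀ i j : Fin n, i.val + 1 < n → j.val + 1 < n → ⁅b i, b j⁆ = 0)
    (hbr0 : ⁅b ⟨0, by omega⟩, b ⟨n-1, by omega⟩⁆ = 0)
    (hbrN : ∀ i : Fin n, 1 ≤ i.val → i.val + 1 < n →
      ⁅b i, b ⟨n-1, by omega⟩⁆ = b ⟨i.val - 1, lt_of_le_of_lt (Nat.sub_le _ _) i.isLt⟩)
    (D : Module.End F L)
    (hD : ∀ x y : L, D ⁅x, y⁆ = ⁅D x, y⁆ + ⁅x, D y⁆)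
    (hmu : b.repr (D (b ⟨n-1, by omega⟩)) ⟨n-1, by omega⟩ = 0)
    (hlam : b.repr (D (b ⟨n-2, by omega⟩)) ⟨n-2, by omega⟩ = 0) :
    IsNilpotent D := by
  have adz : ∀ z : L, ∃ f : L →ₗ[F] L, ∀ y, f y = ⁅y, z⁆ := fun z =>
    ⟨{ toFun := fun y => ⁅y, z⁆, map_add' := fun a c => add_lie a c z,
       map_smul' := fun c a => smul_lie c a z }, fun _ => rfl⟩
  have expand : ∀ (y : L) (j : Fin n), ⁅y, b j⁆ = ∑ i : Fin n, b.repr y i • ⁅b i, b j⁆ := by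
    intro y j
    obtain ⟨f, hf⟩ := adz (b j)
    rw [← hf]
    conv_lhs => rw [← b.sum_repr y]
    rw [map_sum]
    simp [hf]
  -- repr of basis brackets with b ⟨n-1⟩
  have hrepS : ∀ i j : Fin n, b.repr ⁅b i, b ⟨n-1, by omega⟩⁆ j
      = if i.val = j.val + 1 ∧ i.val + 1 < n then 1 else 0 := by
    intro i j
    rcases Nat.eq_zero_or_pos i.val with hi0 | hi1
    · have hi : i = (⟨0, by omega⟩ : Fin n) := Fin.ext hi0
      rw [hi, hbr0, map_zero, if_neg (by simp only [Fin.val_mk]; omega)]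
      rfl
    · rcases lt_or_ge (i.val + 1) n with hin | hin
      · rw [hbrN i hi1 hin, b.repr_self, Finsupp.single_apply]
        split_ifs with h1 h2 h2
        · rfl
        · exfalso; rw [Fin.ext_iff] at h1; simp only [Fin.val_mk] at h1; omega
        · exfalso; exact h1 (Fin.ext (by simp only [Fin.val_mk]; omega))
        · rfl
      · have hi : i = (⟨n-1, by omega⟩ : Fin n) :=
          Fin.ext (by simp only [Fin.val_mk]; have := i.isLt; omega)
        rw [hi, lie_self, map_zero, if_neg (by simp only [Fin.val_mk]; omega)]
        rfl
  -- coordinates of ⁅y, b ⟨n-1⟩⁆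
  have hSrep : ∀ (y : L) (j : Fin n), b.repr ⁅y, b ⟨n-1, by omega⟩⁆ j
      = if _h : j.val + 3 ≤ n then b.repr y ⟨j.val + 1, by omega⟩ else 0 := by
    intro y j
    have h1 : b.repr ⁅y, b ⟨n-1, by omega⟩⁆ j
        = ∑ i : Fin n, b.repr y i * b.repr ⁅b i, b ⟨n-1, by omega⟩⁆ j := by
      rw [expand y ⟨n-1, by omega⟩, map_sum, Finsupp.finset_sum_apply]
      simp [Finsupp.smul_apply]
    rw [h1]
    simp_rw [hrepS, mul_ite, mul_one, mul_zero]
    split_ifs with h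
    · rw [Finset.sum_eq_single (⟨j.val + 1, by omega⟩ : Fin n)]
      · have hcond : ((⟨j.val + 1, by omega⟩ : Fin n)).val = j.val + 1 ∧
            ((⟨j.val + 1, by omega⟩ : Fin n)).val + 1 < n :=
          ⟨rfl, show j.val + 1 + 1 < n by omega⟩
        rw [if_pos hcond]
      · intro i _ hne
        rw [if_neg]
        rintro ⟨h1, _⟩
        exact hne (Fin.ext (by simp only [Fin.val_mk]; omega))
      · intro hmem; exact absurd (Finset.mem_univ _) hmem
    · apply Finset.sum_eq_zero
      intro i _
      rw [if_neg]
      rintro ⟨h1, h2⟩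
      omega
  -- general bracket with interior basis vector
  have hlie_gen : ∀ (y : L) (j : Fin n), 1 ≤ j.val → j.val + 1 < n →
      ⁅y, b j⁆ = -(b.repr y ⟨n-1, by omega⟩ •
        b ⟨j.val - 1, lt_of_le_of_lt (Nat.sub_le _ _) j.isLt⟩) := by
    intro y j h1 h2
    rw [expand y j, Finset.sum_eq_single (⟨n-1, by omega⟩ : Fin n)]
    · rw [← lie_skew, hbrN j h1 h2, smul_neg]
    · intro i _ hne
      have hi : i.val + 1 < n := by
        have h3 := i.isLt
        have h4 : i.val ≠ n - 1 := fun h => hne (Fin.ext (by simp only [Fin.val_mk]; omega))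
        omega
      rw [hbrA i j hi h2, smul_zero]
    · intro hmem; exact absurd (Finset.mem_univ _) hmem
  -- coefficient of e_n in D (e_{n-1}) vanishes
  have hA : b.repr (D (b ⟨n-2, by omega⟩)) ⟨n-1, by omega⟩ = 0 := by
    have hd := hD (b (⟨n-2, by omega⟩ : Fin n)) (b (⟨n-3, by omega⟩ : Fin n))
    rw [hbrA _ _ (by simp only [Fin.val_mk]; omega) (by simp only [Fin.val_mk]; omega),
      map_zero] at hd
    rw [hlie_gen (D (b ⟨n-2, by omega⟩)) ⟨n-3, by omega⟩
      (by simp only [Fin.val_mk]; omega) (by simp only [Fin.val_mk]; omega)] at hd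
    rw [← lie_skew (b (⟨n-2, by omega⟩ : Fin n))] at hd
    rw [hlie_gen (D (b ⟨n-3, by omega⟩)) ⟨n-2, by omega⟩
      (by simp only [Fin.val_mk]; omega) (by simp only [Fin.val_mk]; omega)] at hd
    have hc := congrArg (fun z => b.repr z (⟨n-4, by omega⟩ : Fin n)) hd
    simp only [map_zero, map_add, map_neg, map_smul, Finsupp.coe_zero, Pi.zero_apply,
      Finsupp.add_apply, Finsupp.neg_apply, Finsupp.smul_apply, smul_eq_mul, neg_neg,
      Module.Basis.repr_self, Finsupp.single_apply, Fin.mk.injEq, Fin.val_mk] at hc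
    split_ifs at hc with h1 h2 <;> first
      | omega
      | linear_combination -hc
      | linear_combination hc
  -- recursion
  have hrec : ∀ i : Fin n, 1 ≤ i.val → i.val + 1 < n →
      D (b ⟨i.val - 1, lt_of_le_of_lt (Nat.sub_le _ _) i.isLt⟩)
        = ⁅D (b i), b ⟨n-1, by omega⟩⁆ := by
    intro i h1 h2
    have hd := hD (b i) (b ⟨n-1, by omega⟩)
    rw [hbrN i h1 h2] at hd
    have h4 : ⁅b i, D (b ⟨n-1, by omega⟩)⁆ = 0 := by
      rw [← lie_skew, hlie_gen (D (b ⟨n-1, by omega⟩)) i h1 h2, hmu, zero_smul]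
      simp
    rw [h4, add_zero] at hd
    exact hd
  -- downward induction
  have Q : ∀ m : ℕ, m ≤ n - 2 → ∀ j : Fin n, n - 2 - m ≤ j.val →
      b.repr (D (b ⟨n - 2 - m, by omega⟩)) j = 0 := by
    intro m
    induction m with
    | zero =>
      intro _ j hj
      rcases (by omega : j.val = n - 2 ∨ j.val = n - 1) with h | h
      · have hjj : j = (⟨n-2, by omega⟩ : Fin n) := Fin.ext (by simp only [Fin.val_mk]; omega)
        have hii : (⟨n - 2 - 0, by omega⟩ : Fin n) = ⟨n-2, by omega⟩ :=
          Fin.ext (by simp only [Fin.val_mk]; omega)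
        rw [hjj, hii]
        exact hlam
      · have hjj : j = (⟨n-1, by omega⟩ : Fin n) := Fin.ext (by simp only [Fin.val_mk]; omega)
        have hii : (⟨n - 2 - 0, by omega⟩ : Fin n) = ⟨n-2, by omega⟩ :=
          Fin.ext (by simp only [Fin.val_mk]; omega)
        rw [hjj, hii]
        exact hA
    | succ m ih =>
      intro hm j hj
      have hmk : (⟨n - 2 - (m+1), by omega⟩ : Fin n)
          = ⟨(⟨n - 2 - m, by omega⟩ : Fin n).val - 1,
              lt_of_le_of_lt (Nat.sub_le _ _) (Fin.isLt _)⟩ :=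
        Fin.ext (by simp only [Fin.val_mk]; omega)
      rw [hmk, hrec ⟨n - 2 - m, by omega⟩ (by simp only [Fin.val_mk]; omega)
        (by simp only [Fin.val_mk]; omega), hSrep]
      split_ifs with h
      · exact ih (by omega) ⟨j.val + 1, by omega⟩ (by simp only [Fin.val_mk]; omega)
      · rfl
  -- strict triangularity
  have T : ∀ i j : Fin n, i.val ≤ j.val → b.repr (D (b i)) j = 0 := by
    intro i j hij
    rcases lt_or_ge i.val (n-1) with h | h
    · have h2 : i = ⟨n - 2 - (n - 2 - i.val), by omega⟩ :=
        Fin.ext (by simp only [Fin.val_mk]; have := i.isLt; omega)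
      rw [h2]
      exact Q (n - 2 - i.val) (by omega) j (by omega)
    · have hi : i = (⟨n-1, by omega⟩ : Fin n) :=
        Fin.ext (by simp only [Fin.val_mk]; have := i.isLt; omega)
      have hj : j = (⟨n-1, by omega⟩ : Fin n) :=
        Fin.ext (by simp only [Fin.val_mk]; have := j.isLt; omega)
      rw [hi, hj]
      exact hmu
  have repr_D_sum : ∀ (x : L) (j : Fin n),
      b.repr (D x) j = ∑ i : Fin n, b.repr x i * b.repr (D (b i)) j := by
    intro x j
    conv_lhs => rw [← b.sum_repr x]
    rw [map_sum, map_sum, Finsupp.finset_sum_apply]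
    simp [Finsupp.smul_apply]
  have step : ∀ (m : ℕ) (x : L), (∀ j : Fin n, m + 1 ≤ j.val → b.repr x j = 0) →
      ∀ j : Fin n, m ≤ j.val → b.repr (D x) j = 0 := by
    intro m x hx j hj
    rw [repr_D_sum]
    apply Finset.sum_eq_zero
    intro i _
    rcases le_or_gt i.val j.val with h | h
    · rw [T i j h, mul_zero]
    · rw [hx i (by omega), zero_mul]
  have main : ∀ (k : ℕ) (x : L), ∀ j : Fin n, n - k ≤ j.val → b.repr ((D ^ k) x) j = 0 := by
    intro k
    induction k with
    | zero => intro x j hj; exact absurd j.isLt (by omega)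
    | succ k ih =>
      intro x j hj
      rw [pow_succ', Module.End.mul_apply]
      exact step (n - (k+1)) ((D ^ k) x) (fun j' hj' => ih x j' (by omega)) j hj
  refine ⟨n, ?_⟩
  ext x
  have hz : b.repr ((D ^ n) x) = 0 := Finsupp.ext fun j => main n x j (by omega)
  have hzz := (LinearEquiv.map_eq_zero_iff b.repr).mp hz
  simpa using hzz


/-- Any three derivations of `n_{n,1}` admit a nontrivial linear
combination which is a nilpotent endomorphism: at most two linearly nil-independent
derivations exist. -/
theorem nn1_three_derivations_nil_dependent
    (F : Type*) [Field F] [CharZero F] (n : ℕ) (hn : 4 ≤ n)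
    (L : Type*) [LieRing L] [LieAlgebra F L] (e : ℕ → L)
    (he : IsNn1Basis F n e)
    (D₁ D₂ D₃ : Module.End F L)
    (hD₁ : ∀ x y : L, D₁ ⁅x, y⁆ = ⁅D₁ x, y⁆ + ⁅x, D₁ y⁆)
    (hD₂ : ∀ x y : L, D₂ ⁅x, y⁆ = ⁅D₂ x, y⁆ + ⁅x, D₂ y⁆)
    (hD₃ : ∀ x y : L, D₃ ⁅x, y⁆ = ⁅D₃ x, y⁆ + ⁅x, D₃ y⁆) :
    ∃ c₁ c₂ c₃ : F, ¬(c₁ = 0 ∧ c₂ = 0 ∧ c₃ = 0) ∧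
      IsNilpotent (c₁ • D₁ + c₂ • D₂ + c₃ • D₃) := by
  obtain ⟨hli, hsp, hbr, hbr1n, hbrkn⟩ := he
  let b : Module.Basis (Fin n) F L := Module.Basis.mk hli hsp.ge
  have hb : ∀ i : Fin n, b i = e (i.val + 1) := fun i => Module.Basis.mk_apply hli hsp.ge i
  have hbrA : ∀ i j : Fin n, i.val + 1 < n → j.val + 1 < n → ⁅b i, b j⁆ = 0 := by
    intro i j hi hj
    rw [hb, hb]
    exact hbr (i.val + 1) (j.val + 1) (by omega) (by omega) (by omega) (by omega)
  have hbr0 : ⁅b ⟨0, by omega⟩, b ⟨n-1, by omega⟩⁆ = 0 := by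
    rw [hb, hb]
    have h1 : ((⟨0, by omega⟩ : Fin n)).val + 1 = 1 := rfl
    have h2 : ((⟨n-1, by omega⟩ : Fin n)).val + 1 = n := by simp only [Fin.val_mk]; omega
    rw [h1, h2]
    exact hbr1n
  have hbrN : ∀ i : Fin n, 1 ≤ i.val → i.val + 1 < n →
      ⁅b i, b ⟨n-1, by omega⟩⁆ = b ⟨i.val - 1, lt_of_le_of_lt (Nat.sub_le _ _) i.isLt⟩ := by
    intro i h1 h2
    rw [hb, hb, hb]
    have h3 : ((⟨n-1, by omega⟩ : Fin n)).val + 1 = n := by simp only [Fin.val_mk]; omega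
    rw [h3]
    have h4 := hbrkn (i.val + 1) (by omega) (by omega)
    rw [h4]
    congr 1
    simp only [Fin.val_mk]
    omega
  -- the two linear functionals
  set N : Fin n := ⟨n-1, by omega⟩ with hN
  set M : Fin n := ⟨n-2, by omega⟩ with hM
  let mu : Module.End F L → F := fun D => b.repr (D (b N)) N
  let lam : Module.End F L → F := fun D => b.repr (D (b M)) M
  let v : Fin 3 → F × F := ![(mu D₁, lam D₁), (mu D₂, lam D₂), (mu D₃, lam D₃)]
  have hdep : ¬ LinearIndependent F v := by
    intro h
    have h2 := h.fintype_card_le_finrank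
    simp [Module.finrank_prod] at h2
  obtain ⟨g, hg, i₀, hi₀⟩ := Fintype.not_linearIndependent_iff.mp hdep
  refine ⟨g 0, g 1, g 2, ?_, ?_⟩
  · rintro ⟨h0, h1, h2⟩
    fin_cases i₀ <;> simp_all
  · rw [Fin.sum_univ_three] at hg
    simp only [v, Matrix.cons_val_zero, Matrix.cons_val_one, Matrix.head_cons,
      Matrix.cons_val_two, Matrix.tail_cons, Prod.smul_mk, Prod.mk_add_mk,
      Prod.mk_eq_zero, smul_eq_mul] at hg
    obtain ⟨hgmu, hglam⟩ := hg
    set D : Module.End F L := g 0 • D₁ + g 1 • D₂ + g 2 • D₃ with hDdef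
    have hD : ∀ x y : L, D ⁅x, y⁆ = ⁅D x, y⁆ + ⁅x, D y⁆ := by
      intro x y
      simp only [hDdef, LinearMap.add_apply, LinearMap.smul_apply, hD₁ x y, hD₂ x y, hD₃ x y,
        smul_add, add_lie, lie_add, smul_lie, lie_smul]
      abel
    have hrepr : ∀ (z : L) (j : Fin n),
        b.repr (D z) j = g 0 * b.repr (D₁ z) j + g 1 * b.repr (D₂ z) j
          + g 2 * b.repr (D₃ z) j := by
      intro z j
      simp only [hDdef, LinearMap.add_apply, LinearMap.smul_apply, map_add, map_smul,
        Finsupp.add_apply, Finsupp.smul_apply, smul_eq_mul]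
    have hmu : b.repr (D (b N)) N = 0 := by rw [hrepr]; exact hgmu
    have hlam : b.repr (D (b M)) M = 0 := by rw [hrepr]; exact hglam
    exact nn1_key hn b hbrA hbr0 hbrN D hD hmu hlam
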